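/- For every real p > 1 and every real n ≥ 1, the function φ_n is convex on ℝ, and φ_n is differentiable at every x ∈ ℝ with derivative φ_n′(x) = ψ_n(x). -/

import Mathlib

/-- The quadratic-growth approximation `φ_n(x)` of `|x|^{2p}` (Lemma 4.1):
`φ_n(x) = (x²)^p` if `x² ≤ n`, and `φ_n(x) = n^p + p n^(p−1)(x² − n)` otherwise.
Powers are real powers (rpow). -/
noncomputable def phiN (p n x : ℝ) : ℝ :=
  if x ^ 2 ≤ n then (x ^ 2) ^ p else n ^ p + p * n ^ (p - 1) * (x ^ 2 - n)

/-- The derivative `ψ_n` of `φ_n` (Lemma 4.1):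
`ψ_n(x) = 2p x (x²)^(p−1)` if `x² ≤ n`, and `ψ_n(x) = 2p n^(p−1) x` otherwise. -/
noncomputable def psiN (p n x : ℝ) : ℝ :=
  if x ^ 2 ≤ n then 2 * p * x * (x ^ 2) ^ (p - 1) else 2 * p * n ^ (p - 1) * x

/-- The a.e. second derivative `χ_n` of `φ_n` (Lemma 4.1):
`χ_n(x) = 2p(2p−1)(x²)^(p−1)` if `x² ≤ n`, and `χ_n(x) = 2p n^(p−1)` otherwise. -/
noncomputable def chiN (p n x : ℝ) : ℝ :=
  if x ^ 2 ≤ n then 2 * p * (2 * p - 1) * (x ^ 2) ^ (p - 1) else 2 * p * n ^ (p - 1)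

open Set Filter Real Topology

section aux
variable {p n : ℝ} (hp : 1 < p) (hn : 1 ≤ n)

include hp in
lemma sq_rpow_hasDerivAt (x : ℝ) :
    HasDerivAt (fun y : ℝ => (y ^ 2) ^ p) (2 * p * x * (x ^ 2) ^ (p - 1)) x := by
  have h := (Real.hasDerivAt_rpow_const (x := x ^ 2) (p := p) (Or.inr hp.le)).comp x
    (hasDerivAt_pow 2 x)
  rw [show 2 * p * x * (x ^ 2) ^ (p - 1) = p * (x ^ 2) ^ (p - 1) * (((2 : ℕ) : ℝ) * x ^ (2 - 1)) by
    push_cast; ring]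
  exact h

lemma lin_hasDerivAt (x : ℝ) :
    HasDerivAt (fun y : ℝ => n ^ p + p * n ^ (p - 1) * (y ^ 2 - n)) (2 * p * n ^ (p - 1) * x) x := by
  have h := ((((hasDerivAt_pow 2 x).sub_const n).const_mul (p * n ^ (p - 1))).const_add (n ^ p))
  rw [show 2 * p * n ^ (p - 1) * x = p * n ^ (p - 1) * (((2 : ℕ) : ℝ) * x ^ (2 - 1)) by
    push_cast; ring]
  exact h

lemma psiN_eq (x : ℝ) : psiN p n x = 2 * p * (x * (min (x ^ 2) n) ^ (p - 1)) := by
  unfold psiN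
  split_ifs with h
  · rw [min_eq_left h]; ring
  · rw [min_eq_right (le_of_not_ge h)]; ring

include hp hn in
lemma psiN_mono : Monotone (psiN p n) := by
  have hg : Monotone (fun x : ℝ => x * (min (x ^ 2) n) ^ (p - 1)) := by
    have key : ∀ a b : ℝ, 0 ≤ a → a ≤ b →
        a * (min (a ^ 2) n) ^ (p - 1) ≤ b * (min (b ^ 2) n) ^ (p - 1) := by
      intro a b ha hab
      have h2 : min (a ^ 2) n ≤ min (b ^ 2) n :=
        min_le_min (by nlinarith) le_rfl
      have h3 : (min (a ^ 2) n) ^ (p - 1) ≤ (min (b ^ 2) n) ^ (p - 1) :=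
        Real.rpow_le_rpow (le_min (sq_nonneg a) (by linarith)) h2 (by linarith)
      exact mul_le_mul hab h3 (Real.rpow_nonneg (le_min (sq_nonneg a) (by linarith)) _)
        (le_trans ha hab)
    intro a b hab
    rcases le_or_gt 0 a with h0 | h0
    · exact key a b h0 hab
    rcases le_or_gt b 0 with h1 | h1
    · have h := key (-b) (-a) (by linarith) (by linarith)
      have e1 : (-b : ℝ) ^ 2 = b ^ 2 := by ring
      have e2 : (-a : ℝ) ^ 2 = a ^ 2 := by ring
      rw [e1, e2, neg_mul, neg_mul] at h
      have : a * (min (a ^ 2) n) ^ (p - 1) ≤ b * (min (b ^ 2) n) ^ (p - 1) := by linarith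
      exact this
    · have hA : a * (min (a ^ 2) n) ^ (p - 1) ≤ 0 :=
        mul_nonpos_of_nonpos_of_nonneg h0.le
          (Real.rpow_nonneg (le_min (sq_nonneg a) (by linarith)) _)
      have hB : 0 ≤ b * (min (b ^ 2) n) ^ (p - 1) :=
        mul_nonneg h1.le (Real.rpow_nonneg (le_min (sq_nonneg b) (by linarith)) _)
      exact le_trans hA hB
  intro a b hab
  rw [psiN_eq, psiN_eq]
  exact mul_le_mul_of_nonneg_left (hg hab) (by linarith)

include hp hn in
lemma phiN_hasDerivAt (x : ℝ) : HasDerivAt (phiN p n) (psiN p n x) x := by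
  rcases lt_trichotomy (x ^ 2) n with hlt | heq | hgt
  · -- interior of the rpow region
    have hev : phiN p n =ᶠ[𝓝 x] fun y => (y ^ 2) ^ p := by
      have hcont : ContinuousAt (fun y : ℝ => y ^ 2) x := by fun_prop
      filter_upwards [hcont.eventually_lt continuousAt_const hlt] with y hy
      simp [phiN, hy.le]
    have hv : psiN p n x = 2 * p * x * (x ^ 2) ^ (p - 1) := by
      rw [psiN, if_pos hlt.le]
    rw [hv]
    exact (sq_rpow_hasDerivAt hp x).congr_of_eventuallyEq hev
  · -- boundary
    have hx0 : x ≠ 0 := by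
      intro h; rw [h] at heq; simp at heq; linarith
    have hpsi : psiN p n x = 2 * p * n ^ (p - 1) * x := by
      rw [psiN, if_pos heq.le, heq]; ring
    rw [hpsi]
    have key : HasDerivAt (fun y : ℝ => (y ^ 2) ^ p) (2 * p * n ^ (p - 1) * x) x := by
      have h := sq_rpow_hasDerivAt hp x
      rw [heq] at h
      convert h using 1; ring
    have hxval1 : phiN p n x = (x ^ 2) ^ p := by rw [phiN, if_pos heq.le]
    have hxval2 : phiN p n x = n ^ p + p * n ^ (p - 1) * (x ^ 2 - n) := by
      rw [phiN, if_pos heq.le, heq]; ring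
    have hlinagree : ∀ y : ℝ, n ≤ y ^ 2 →
        phiN p n y = n ^ p + p * n ^ (p - 1) * (y ^ 2 - n) := by
      intro y h2
      unfold phiN
      split_ifs with h
      · have : y ^ 2 = n := le_antisymm h h2
        rw [this]; ring
      · rfl
    rcases hx0.lt_or_gt with hneg | hpos
    · -- x < 0
      have hleft : HasDerivWithinAt (phiN p n) (2 * p * n ^ (p - 1) * x) (Iic x) x := by
        refine (lin_hasDerivAt x).hasDerivWithinAt.congr_of_eventuallyEq ?_ hxval2
        filter_upwards [self_mem_nhdsWithin] with y (hy : y ≤ x)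
        exact hlinagree y (by nlinarith)
      have hright : HasDerivWithinAt (phiN p n) (2 * p * n ^ (p - 1) * x) (Ici x) x := by
        refine key.hasDerivWithinAt.congr_of_eventuallyEq ?_ hxval1
        filter_upwards [self_mem_nhdsWithin,
          eventually_nhdsWithin_of_eventually_nhds (eventually_lt_nhds hneg)]
          with y (hy : x ≤ y) (hy' : y < 0)
        have h2 : y ^ 2 ≤ n := by nlinarith
        rw [phiN, if_pos h2]
      have h := hleft.union hright
      rw [Iic_union_Ici] at h
      exact h.hasDerivAt univ_mem
    · -- x > 0
      have hleft : HasDerivWithinAt (phiN p n) (2 * p * n ^ (p - 1) * x) (Iic x) x := by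
        refine key.hasDerivWithinAt.congr_of_eventuallyEq ?_ hxval1
        filter_upwards [self_mem_nhdsWithin,
          eventually_nhdsWithin_of_eventually_nhds (eventually_gt_nhds hpos)]
          with y (hy : y ≤ x) (hy' : 0 < y)
        have h2 : y ^ 2 ≤ n := by nlinarith
        rw [phiN, if_pos h2]
      have hright : HasDerivWithinAt (phiN p n) (2 * p * n ^ (p - 1) * x) (Ici x) x := by
        refine (lin_hasDerivAt x).hasDerivWithinAt.congr_of_eventuallyEq ?_ hxval2
        filter_upwards [self_mem_nhdsWithin] with y (hy : x ≤ y)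
        exact hlinagree y (by nlinarith)
      have h := hleft.union hright
      rw [Iic_union_Ici] at h
      exact h.hasDerivAt univ_mem
  · -- interior of the linear region
    have hev : phiN p n =ᶠ[𝓝 x] fun y => n ^ p + p * n ^ (p - 1) * (y ^ 2 - n) := by
      have hcont : ContinuousAt (fun y : ℝ => y ^ 2) x := by fun_prop
      filter_upwards [continuousAt_const.eventually_lt hcont hgt] with y hy
      rw [phiN, if_neg (not_le.mpr hy)]
    have hv : psiN p n x = 2 * p * n ^ (p - 1) * x := by
      rw [psiN, if_neg (not_le.mpr hgt)]
    rw [hv]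
    exact (lin_hasDerivAt x).congr_of_eventuallyEq hev

end aux

/-- For every real `p > 1` and `n ≥ 1`, `φ_n` is convex on `ℝ`,
and `φ_n` is differentiable at every `x ∈ ℝ` with derivative `ψ_n(x)`. -/
theorem phiN_convexOn_and_hasDerivAt (p n : ℝ) (hp : 1 < p) (hn : 1 ≤ n) :
    ConvexOn ℝ Set.univ (phiN p n) ∧ ∀ x : ℝ, HasDerivAt (phiN p n) (psiN p n x) x := by
  have hd := phiN_hasDerivAt hp hn
  refine ⟨?_, hd⟩
  have hdiff : Differentiable ℝ (phiN p n) := fun x => (hd x).differentiableAt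
  have hderiv : deriv (phiN p n) = psiN p n := funext fun x => (hd x).deriv
  exact Monotone.convexOn_univ_of_deriv (f := phiN p n) hdiff (hderiv ▸ psiN_mono hp hn)
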